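/- Define K₁ : (0,∞) → ℝ by K₁(y) := ∫_0^∞ e^{−y·cosh u}·cosh u du. Fix parameters μ, θ, b ∈ ℝ and δ > 0 with θ² + μ² > 0, and for t > 0 define f_t(z) := (1/π)·sqrt((θ²+μ²)/(((z−bt)/(δt))²+1))·exp(μδt + θ(z−bt))·K₁(δt·sqrt((θ²+μ²)·(1+((z−bt)/(δt))²))), and α(t) := t^{-1/2}·exp(t·(μδ − θb − sqrt((b²+δ²)(θ²+μ²)))). Then for every z ∈ ℝ, f_t(z)/α(t) → (δ/√(2π))·((θ²+μ²)/(b²+δ²)³)^{1/4}·exp((θ + b·sqrt((θ²+μ²)/(b²+δ²)))·z) as t → ∞. -/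

import Mathlib

open Filter Topology Real MeasureTheory Set

/-- The modified Bessel function of the third kind of order 1,
`K₁(y) = ∫_0^∞ e^{-y cosh u} cosh u du`. -/
noncomputable def besselK1 (y : ℝ) : ℝ :=
  ∫ u in Set.Ioi (0 : ℝ), Real.exp (-y * Real.cosh u) * Real.cosh u

lemma sinh_image_Ioi : Real.sinh '' Set.Ioi (0:ℝ) = Set.Ioi (0:ℝ) := by
  ext x
  constructor
  · rintro ⟨u, hu, rfl⟩
    exact Real.sinh_pos_iff.2 hu
  · intro hx
    exact ⟨Real.arsinh x, Real.arsinh_pos_iff.2 hx, Real.sinh_arsinh x⟩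

lemma besselK1_eq (y : ℝ) :
    besselK1 y = ∫ s in Set.Ioi (0:ℝ), Real.exp (-y * Real.sqrt (1 + s^2)) := by
  have h := integral_image_eq_integral_abs_deriv_smul (s := Set.Ioi (0:ℝ))
    (f := Real.sinh) (f' := Real.cosh) measurableSet_Ioi
    (fun x _ => (Real.hasDerivAt_sinh x).hasDerivWithinAt)
    (Real.sinh_injective.injOn)
    (fun s => Real.exp (-y * Real.sqrt (1 + s^2)))
  rw [sinh_image_Ioi] at h
  rw [h, besselK1]
  refine setIntegral_congr_fun measurableSet_Ioi (fun u _ => ?_)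
  have h1 : Real.sqrt (1 + Real.sinh u ^ 2) = Real.cosh u := by
    rw [← Real.cosh_sq', Real.sqrt_sq (Real.cosh_pos u).le]
  rw [h1, abs_of_pos (Real.cosh_pos u)]
  simp [mul_comm]

lemma besselK1_key {y : ℝ} (hy : 0 < y) :
    Real.sqrt y * Real.exp y * besselK1 y
      = ∫ v in Set.Ioi (0:ℝ), Real.exp (-(v^2/(1 + Real.sqrt (1 + v^2/y)))) := by
  have hs : 0 < Real.sqrt y := Real.sqrt_pos.2 hy
  have h := integral_comp_mul_left_Ioi
    (fun s => Real.exp (-y * Real.sqrt (1 + s^2))) 0 (inv_pos.2 hs)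
  rw [mul_zero, inv_inv, smul_eq_mul] at h
  rw [besselK1_eq, mul_comm (Real.sqrt y) (Real.exp y), mul_assoc, ← h,
    ← MeasureTheory.integral_const_mul]
  refine setIntegral_congr_fun measurableSet_Ioi (fun v _ => ?_)
  have h2 : ((Real.sqrt y)⁻¹ * v)^2 = v^2 / y := by
    rw [mul_pow, inv_pow, Real.sq_sqrt hy.le]
    ring
  rw [h2, ← Real.exp_add]
  congr 1
  set w := Real.sqrt (1 + v^2/y) with hwdef
  have hw : w^2 = 1 + v^2/y := Real.sq_sqrt (by positivity)
  have hw' : w^2 * y = y + v^2 := by rw [hw]; field_simp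
  have hw1 : (0:ℝ) < 1 + w := by positivity
  rw [show -(v^2/(1+w)) = (-v^2)/(1+w) by rw [neg_div], eq_div_iff hw1.ne']
  linear_combination -hw'

lemma integrable_bound :
    IntegrableOn (fun v : ℝ => Real.exp (2 - v)) (Set.Ioi (0:ℝ)) := by
  have h := exp_neg_integrableOn_Ioi (0:ℝ) (one_pos)
  have : (fun v : ℝ => Real.exp (2 - v)) = fun v => Real.exp 2 * Real.exp (-1 * v) := by
    ext v; rw [← Real.exp_add]; ring_nf
  rw [this]
  exact h.const_mul _

lemma bound_ineq {y v : ℝ} (hy : 1 ≤ y) (hv : 0 < v) :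
    Real.exp (-(v^2/(1 + Real.sqrt (1 + v^2/y)))) ≤ Real.exp (2 - v) := by
  apply Real.exp_le_exp.2
  have h1 : Real.sqrt (1 + v^2/y) ≤ Real.sqrt (1 + v^2) := by
    apply Real.sqrt_le_sqrt
    have : v^2/y ≤ v^2 := by
      rw [div_le_iff₀ (by linarith)]
      nlinarith [sq_nonneg v]
    linarith
  have h2 : Real.sqrt (1 + v^2) ≤ 1 + v := by
    rw [show (1:ℝ) + v = Real.sqrt ((1+v)^2) by rw [Real.sqrt_sq (by linarith)]]
    apply Real.sqrt_le_sqrt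
    nlinarith
  have hpos : (0:ℝ) < 1 + Real.sqrt (1 + v^2/y) := by positivity
  have h3 : v^2/(2 + v) ≤ v^2/(1 + Real.sqrt (1 + v^2/y)) := by
    apply div_le_div_of_nonneg_left (sq_nonneg v) hpos
    linarith
  have h4 : v - 2 ≤ v^2/(2 + v) := by
    rw [le_div_iff₀ (by linarith)]
    nlinarith
  linarith

lemma besselK1_asymp :
    Tendsto (fun y => Real.sqrt y * Real.exp y * besselK1 y) atTop
      (𝓝 (Real.sqrt (π/2))) := by
  have hlim : (∫ v in Set.Ioi (0:ℝ), Real.exp (-(v^2/2))) = Real.sqrt (π/2) := by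
    have h := integral_gaussian_Ioi (1/2 : ℝ)
    simp only [show ∀ v : ℝ, -(1/2 : ℝ) * v^2 = -(v^2/2) by intro v; ring] at h
    rw [h, show (π / (1/2 : ℝ)) = 2 * π by ring]
    rw [show (π/2 : ℝ) = 2*π/4 by ring, Real.sqrt_div (by positivity),
      show (4:ℝ) = 2^2 by norm_num, Real.sqrt_sq (by norm_num)]
  rw [← hlim]
  have main : Tendsto (fun y => ∫ v in Set.Ioi (0:ℝ),
      Real.exp (-(v^2/(1 + Real.sqrt (1 + v^2/y))))) atTop
      (𝓝 (∫ v in Set.Ioi (0:ℝ), Real.exp (-(v^2/2)))) := by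
    apply MeasureTheory.tendsto_integral_filter_of_dominated_convergence
      (fun v => Real.exp (2 - v))
    · filter_upwards with y
      apply Continuous.aestronglyMeasurable
      apply Real.continuous_exp.comp
      apply Continuous.neg
      exact Continuous.div (by continuity) (by continuity)
        (fun a => by positivity)
    · filter_upwards [eventually_ge_atTop (1:ℝ)] with y hy
      filter_upwards [ae_restrict_mem measurableSet_Ioi] with v hv
      rw [Real.norm_eq_abs, abs_of_pos (Real.exp_pos _)]
      exact bound_ineq hy hv
    · exact integrable_bound
    · filter_upwards [ae_restrict_mem measurableSet_Ioi] with v hv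
      have h1 : Tendsto (fun y : ℝ => v^2/y) atTop (𝓝 0) :=
        tendsto_const_nhds.div_atTop tendsto_id
      have h2 : Tendsto (fun y : ℝ => 1 + Real.sqrt (1 + v^2/y)) atTop (𝓝 2) := by
        have h0 : Tendsto (fun y : ℝ => 1 + v^2/y) atTop (𝓝 1) := by
          simpa using h1.const_add 1
        have := ((Real.continuous_sqrt.tendsto 1).comp h0).const_add 1
        norm_num [Function.comp] at this
        exact this
      have h3 : Tendsto (fun y : ℝ => -(v^2/(1 + Real.sqrt (1 + v^2/y)))) atTop
          (𝓝 (-(v^2/2))) :=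
        (Tendsto.div tendsto_const_nhds h2 (by norm_num)).neg
      exact (Real.continuous_exp.tendsto _).comp h3
  refine main.congr' ?_
  filter_upwards [eventually_gt_atTop (0:ℝ)] with y hy
  exact (besselK1_key hy).symm

lemma pow4_inj {A B : ℝ} (hA : 0 ≤ A) (hB : 0 ≤ B) (h : A^4 = B^4) : A = B := by
  have e : ∀ x : ℝ, 0 ≤ x → Real.sqrt (Real.sqrt (x^4)) = x := by
    intro x hx
    rw [show x^4 = (x^2)^2 by ring, Real.sqrt_sq (sq_nonneg x), Real.sqrt_sq hx]
  rw [← e A hA, ← e B hB, h]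

section main
variable {μ θ b δ z : ℝ} (hδ : 0 < δ) (hq : 0 < θ^2 + μ^2)

lemma hx_lim (hδ : 0 < δ) : Tendsto (fun t : ℝ => (z - b*t)/(δ*t)) atTop (𝓝 (-b/δ)) := by
  have h : Tendsto (fun t : ℝ => (z/t - b)/δ) atTop (𝓝 ((0 - b)/δ)) :=
    ((tendsto_const_nhds.div_atTop tendsto_id).sub_const b).div_const δ
  rw [zero_sub] at h
  refine h.congr' ?_
  filter_upwards [eventually_gt_atTop (0:ℝ)] with t ht
  field_simp
end main

lemma sq_inj {A B : ℝ} (hA : 0 ≤ A) (hB : 0 ≤ B) (h : A^2 = B^2) : A = B := by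
  rw [← Real.sqrt_sq hA, ← Real.sqrt_sq hB, h]

lemma key_exponent {b δ z t q : ℝ} (hδ : 0 < δ) (ht : 0 < t) (hq : 0 ≤ q) :
    t * Real.sqrt ((b^2+δ^2)*q) - δ*t*Real.sqrt (q*(1+((z-b*t)/(δ*t))^2))
      = Real.sqrt q * (2*b*z - z^2/t)
        / (Real.sqrt (b^2+δ^2) + Real.sqrt (δ^2 + (z/t - b)^2)) := by
  set sp := Real.sqrt (b^2+δ^2) with hsp_def
  set sW := Real.sqrt (δ^2+(z/t-b)^2) with hsW_def
  have hsp2 : sp^2 = b^2+δ^2 := Real.sq_sqrt (by positivity)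
  have hsW2 : sW^2 = δ^2+(z/t-b)^2 := Real.sq_sqrt (by positivity)
  have hspp : 0 < sp := Real.sqrt_pos.2 (by positivity)
  have hsW0 : 0 ≤ sW := Real.sqrt_nonneg _
  have h1 : Real.sqrt ((b^2+δ^2)*q) = Real.sqrt q * sp := by
    rw [Real.sqrt_mul (by positivity), mul_comm]
  have h2 : δ*t*Real.sqrt (q*(1+((z-b*t)/(δ*t))^2)) = Real.sqrt q * (t * sW) := by
    apply sq_inj (by positivity) (by positivity)
    rw [mul_pow, mul_pow, mul_pow, mul_pow, Real.sq_sqrt (by positivity),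
      Real.sq_sqrt hq, hsW2]
    field_simp
  have hsW2' : sW^2 * t^2 = δ^2*t^2 + (z-b*t)^2 := by
    rw [hsW2]; field_simp
  rw [h1, h2, eq_div_iff (by positivity : (0:ℝ) < sp + sW).ne']
  field_simp
  linear_combination (Real.sqrt q * t^2) * hsp2 - Real.sqrt q * hsW2'

set_option maxHeartbeats 1000000 in
/-- NIG model (conv_Z): the density `f_t` of the Normal Inverse Gaussian log-price,
rescaled by `α(t) = t^{-1/2} exp(t(μδ - θb - √((b²+δ²)(θ²+μ²))))`, converges pointwise to
the limiting modified density
`(δ/√(2π)) ((θ²+μ²)/(b²+δ²)³)^{1/4} exp((θ + b√((θ²+μ²)/(b²+δ²))) z)`. -/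
theorem nig_modified_density_limit
    (μ θ b δ : ℝ) (hδ : 0 < δ) (hθμ : 0 < θ ^ 2 + μ ^ 2) :
    ∀ z : ℝ,
      Tendsto
        (fun t : ℝ =>
          ((1 / π) *
              Real.sqrt ((θ ^ 2 + μ ^ 2) / (((z - b * t) / (δ * t)) ^ 2 + 1)) *
              Real.exp (μ * δ * t + θ * (z - b * t)) *
              besselK1 (δ * t *
                Real.sqrt ((θ ^ 2 + μ ^ 2) * (1 + ((z - b * t) / (δ * t)) ^ 2)))) /
            (t ^ (-(1 / 2 : ℝ)) *
              Real.exp (t * (μ * δ - θ * b -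
                Real.sqrt ((b ^ 2 + δ ^ 2) * (θ ^ 2 + μ ^ 2))))))
        atTop
        (𝓝 ((δ / Real.sqrt (2 * π)) *
          ((θ ^ 2 + μ ^ 2) / (b ^ 2 + δ ^ 2) ^ 3) ^ ((1 : ℝ) / 4) *
          Real.exp ((θ + b * Real.sqrt ((θ ^ 2 + μ ^ 2) / (b ^ 2 + δ ^ 2))) * z))) := by
  intro z
  set p : ℝ := b ^ 2 + δ ^ 2 with hp_def
  set q : ℝ := θ ^ 2 + μ ^ 2 with hq_def
  have hp : 0 < p := by rw [hp_def]; positivity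
  have hq : 0 < q := hθμ
  set c : ℝ := Real.sqrt (p * q) with hc_def
  have hc : 0 < c := Real.sqrt_pos.2 (by positivity)
  clear_value p q c
  -- limit of x t = (z - b t)/(δ t)
  have hx : Tendsto (fun t : ℝ => (z - b*t)/(δ*t)) atTop (𝓝 (-b/δ)) := hx_lim hδ
  -- δ √(q (1 + (b/δ)²)) = c
  have hs0c : δ * Real.sqrt (q*(1+(-b/δ)^2)) = c := by
    apply sq_inj (by positivity) hc.le
    rw [mul_pow, Real.sq_sqrt (by positivity), hc_def, Real.sq_sqrt (by positivity),
      hp_def]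
    field_simp
    ring
  -- y tends to atTop
  have hg : Tendsto (fun t : ℝ => δ * Real.sqrt (q*(1+((z - b*t)/(δ*t))^2))) atTop (𝓝 c) := by
    rw [← hs0c]
    have hcont : Continuous (fun u : ℝ => δ * Real.sqrt (q*(1+u^2))) := by continuity
    exact (hcont.continuousAt (x := -b/δ)).tendsto.comp hx
  have hy_top : Tendsto (fun t : ℝ =>
      δ * t * Real.sqrt (q*(1+((z - b*t)/(δ*t))^2))) atTop atTop := by
    have := (tendsto_id (α := ℝ)).atTop_mul_pos hc hg
    refine this.congr (fun t => by simp only [id_eq]; ring)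
  -- Bessel factor
  have hA : Tendsto (fun t : ℝ =>
      Real.sqrt (δ * t * Real.sqrt (q*(1+((z - b*t)/(δ*t))^2))) *
      Real.exp (δ * t * Real.sqrt (q*(1+((z - b*t)/(δ*t))^2))) *
      besselK1 (δ * t * Real.sqrt (q*(1+((z - b*t)/(δ*t))^2)))) atTop
      (𝓝 (Real.sqrt (π/2))) := besselK1_asymp.comp hy_top
  -- √t/√(y t) factor
  have hB : Tendsto (fun t : ℝ =>
      Real.sqrt t / Real.sqrt (δ * t * Real.sqrt (q*(1+((z - b*t)/(δ*t))^2)))) atTop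
      (𝓝 (1 / Real.sqrt c)) := by
    have hcont : ContinuousAt (fun u : ℝ =>
        Real.sqrt (1/(δ * Real.sqrt (q*(1+u^2))))) (-b/δ) := by
      apply Real.continuous_sqrt.continuousAt.comp
      apply ContinuousAt.div continuousAt_const
      · exact (continuous_const.mul (Real.continuous_sqrt.comp (by continuity))).continuousAt
      · rw [hs0c]; exact hc.ne'
    have h := hcont.tendsto.comp hx
    have hval : Real.sqrt (1/(δ * Real.sqrt (q*(1+(-b/δ)^2)))) = 1/Real.sqrt c := by
      rw [hs0c, one_div, Real.sqrt_inv, one_div]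
    rw [hval] at h
    refine h.congr' ?_
    filter_upwards [eventually_gt_atTop (0:ℝ)] with t ht
    have hsq : 0 < Real.sqrt (q*(1+((z - b*t)/(δ*t))^2)) :=
      Real.sqrt_pos.2 (by positivity)
    simp only [Function.comp]
    rw [← Real.sqrt_div ht.le]
    congr 1
    field_simp
  -- exponential factor
  have hD : Tendsto (fun t : ℝ => Real.sqrt q * (2*b*z - z^2/t)
      / (Real.sqrt p + Real.sqrt (δ^2 + (z/t - b)^2))) atTop
      (𝓝 (b * z * Real.sqrt (q/p))) := by
    have hnum : Tendsto (fun t : ℝ => Real.sqrt q * (2*b*z - z^2/t)) atTop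
        (𝓝 (Real.sqrt q * (2*b*z - 0))) :=
      (((tendsto_const_nhds (x := (2*b*z : ℝ))).sub
        (tendsto_const_nhds.div_atTop tendsto_id)).const_mul _)
    have hden : Tendsto (fun t : ℝ => Real.sqrt p + Real.sqrt (δ^2 + (z/t - b)^2)) atTop
        (𝓝 (Real.sqrt p + Real.sqrt (δ^2 + (0 - b)^2))) := by
      refine tendsto_const_nhds.add ?_
      exact (Real.continuous_sqrt.continuousAt.tendsto.comp
        (((tendsto_const_nhds.div_atTop tendsto_id).sub_const b).pow 2 |>.const_add (δ^2)))
    have hden_ne : Real.sqrt p + Real.sqrt (δ^2 + (0 - b)^2) ≠ 0 := by positivity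
    have h := hnum.div hden hden_ne
    have hval : Real.sqrt q * (2*b*z - 0) / (Real.sqrt p + Real.sqrt (δ^2 + (0 - b)^2))
        = b * z * Real.sqrt (q/p) := by
      have hsp := Real.sqrt_pos.2 hp
      rw [sub_zero, show δ^2 + (0 - b)^2 = p by rw [hp_def]; ring, Real.sqrt_div hq.le]
      rw [div_eq_iff (by positivity : (0:ℝ) < Real.sqrt p + Real.sqrt p).ne']
      field_simp
      ring
    rw [hval] at h
    exact h
  have hC : Tendsto (fun t : ℝ => Real.exp (t * c -
      δ * t * Real.sqrt (q*(1+((z - b*t)/(δ*t))^2)))) atTop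
      (𝓝 (Real.exp (b * z * Real.sqrt (q/p)))) := by
    refine ((Real.continuous_exp.continuousAt.tendsto).comp ?_)
    refine Tendsto.congr' ?_ hD
    filter_upwards [eventually_gt_atTop (0:ℝ)] with t ht
    rw [hc_def, hp_def]
    exact (key_exponent hδ ht hq.le).symm
  -- constant factor
  have hΦ : Tendsto (fun t : ℝ => 1/π * Real.sqrt (q/(((z - b*t)/(δ*t))^2+1))) atTop
      (𝓝 (1/π * Real.sqrt (q/((-b/δ)^2+1)))) := by
    have hd : Continuous (fun u : ℝ => q/(u^2+1)) :=
      continuous_const.div ((continuous_pow 2).add continuous_const)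
        (fun u => by positivity)
    have hcont : Continuous (fun u : ℝ => 1/π * Real.sqrt (q/(u^2+1))) :=
      continuous_const.mul (Real.continuous_sqrt.comp hd)
    exact hcont.continuousAt.tendsto.comp hx
  have hE : Tendsto (fun _ : ℝ => Real.exp (θ*z)) atTop (𝓝 (Real.exp (θ*z))) :=
    tendsto_const_nhds
  have hcomb := (((hΦ.mul hE).mul hA).mul hB).mul hC
  -- value identification
  have hPhiv : Real.sqrt (q/((-b/δ)^2+1)) = δ * Real.sqrt (q/p) := by
    apply sq_inj (Real.sqrt_nonneg _) (by positivity)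
    rw [Real.sq_sqrt (by positivity), mul_pow, Real.sq_sqrt (by positivity), hp_def]
    field_simp
  have l0 : ∀ w : ℝ, 0 ≤ w → Real.sqrt w ^ 4 = w^2 := fun w hw => by
    rw [show (4:ℕ) = 2*2 from rfl, pow_mul, Real.sq_sqrt hw]
  have hscalar : 1/π * (δ * Real.sqrt (q/p)) * Real.sqrt (π/2) * (1/Real.sqrt c)
      = δ / Real.sqrt (2*π) * (q/p^3)^((1:ℝ)/4) := by
    apply pow4_inj (by positivity) (by positivity)
    have e1 : ((q/p^3)^((1:ℝ)/4))^(4:ℕ) = q/p^3 := by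
      rw [← Real.rpow_natCast ((q/p^3)^((1:ℝ)/4)) 4, ← Real.rpow_mul (by positivity)]
      norm_num
    have e2 : Real.sqrt c ^ 4 = p * q := by
      rw [l0 c hc.le, hc_def, Real.sq_sqrt (by positivity)]
    have e3 : Real.sqrt (q/p)^4 = (q/p)^2 := l0 _ (by positivity)
    have e4 : Real.sqrt (π/2)^4 = (π/2)^2 := l0 _ (by positivity)
    have e5 : Real.sqrt (2*π)^4 = (2*π)^2 := l0 _ (by positivity)
    simp only [mul_pow, div_pow, one_pow]
    rw [e1, e2, e3, e4, e5]
    have hπ : (0:ℝ) < π := Real.pi_pos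
    field_simp
  have hexpv : Real.exp (θ*z) * Real.exp (b*z*Real.sqrt (q/p))
      = Real.exp ((θ + b * Real.sqrt (q/p)) * z) := by
    rw [← Real.exp_add]
    congr 1
    ring
  have hval : 1/π * Real.sqrt (q/((-b/δ)^2+1)) * Real.exp (θ*z) * Real.sqrt (π/2) *
      (1/Real.sqrt c) * Real.exp (b*z*Real.sqrt (q/p))
      = δ / Real.sqrt (2*π) * (q/p^3)^((1:ℝ)/4) *
        Real.exp ((θ + b * Real.sqrt (q/p)) * z) := by
    rw [hPhiv, ← hscalar, ← hexpv]
    ring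
  rw [← hval]
  refine hcomb.congr' ?_
  filter_upwards [eventually_gt_atTop (0:ℝ)] with t ht
  have hsq : 0 < Real.sqrt (q*(1+((z - b*t)/(δ*t))^2)) := Real.sqrt_pos.2 (by positivity)
  have hyt : 0 < δ*t*Real.sqrt (q*(1+((z - b*t)/(δ*t))^2)) :=
    mul_pos (mul_pos hδ ht) hsq
  have hst : 0 < Real.sqrt t := Real.sqrt_pos.2 ht
  have hsyt : 0 < Real.sqrt (δ*t*Real.sqrt (q*(1+((z - b*t)/(δ*t))^2))) :=
    Real.sqrt_pos.2 hyt
  have hrp : t ^ (-(1/2:ℝ)) = (Real.sqrt t)⁻¹ := by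
    rw [Real.rpow_neg ht.le, Real.sqrt_eq_rpow]
  have hexp1 : Real.exp (μ*δ*t + θ*(z - b*t))
      = Real.exp (θ*z) * Real.exp (t*c) * Real.exp (t*(μ*δ - θ*b - c)) := by
    rw [← Real.exp_add, ← Real.exp_add]
    congr 1
    ring
  have hexp2 : Real.exp (t*c - δ*t*Real.sqrt (q*(1+((z - b*t)/(δ*t))^2)))
      = Real.exp (t*c) / Real.exp (δ*t*Real.sqrt (q*(1+((z - b*t)/(δ*t))^2))) :=
    Real.exp_sub _ _
  rw [hrp, hexp1, hexp2]
  field_simp
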